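/- Let Y be a Banach space whose dual unit ball is weak* sequentially compact, and let Z be a closed subspace of Y which contains a closed subspace isomorphic to c₀ (i.e., linearly homeomorphic to c₀). Then for every C > 1 there is a bounded linear operator P on Y with P∘P = P and ‖P‖ ≤ C such that the range of P is contained in Z and is C-isomorphic to c₀. -/

import Mathlib

open scoped ENNReal ZeroAtInfty NNReal
open Filter
set_option maxHeartbeats 1000000

namespace St12
variable {𝕜 : Type*} [RCLike 𝕜] {Y : Type*} [NormedAddCommGroup Y] [NormedSpace 𝕜 Y]

lemma le_supn {F : Finset ℕ} {g : ℕ → 𝕜} {n : ℕ} (hn : n ∈ F) :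
    ‖g n‖ ≤ ((F.sup fun m => ‖g m‖₊ : ℝ≥0) : ℝ) := by
  exact_mod_cast NNReal.coe_le_coe.2 (Finset.le_sup (f := fun m => ‖g m‖₊) hn)

lemma supn_le {F : Finset ℕ} {g : ℕ → 𝕜} {M : ℝ} (hM : 0 ≤ M)
    (h : ∀ n ∈ F, ‖g n‖ ≤ M) : ((F.sup fun m => ‖g m‖₊ : ℝ≥0) : ℝ) ≤ M := by
  rw [← Real.coe_toNNReal M hM]
  exact_mod_cast Finset.sup_le fun n hn => by
    have := h n hn
    rw [← Real.coe_toNNReal M hM] at this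
    exact_mod_cast (by exact_mod_cast this : (‖g n‖₊ : ℝ) ≤ (M.toNNReal : ℝ))

/-- evaluation as additive monoid hom -/
def evalHom (k : ℕ) : C₀(ℕ, 𝕜) →+ 𝕜 where
  toFun f := f k
  map_zero' := rfl
  map_add' _ _ := rfl

/-- delta function in c₀ -/
def kdelta (n : ℕ) : C₀(ℕ, 𝕜) :=
  ⟨⟨fun m => if m = n then 1 else 0, continuous_of_discreteTopology⟩, by
    rw [cocompact_eq_atTop]
    refine Tendsto.congr' ?_ tendsto_const_nhds
    filter_upwards [eventually_gt_atTop n] with m hm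
    simp [Nat.ne_of_gt hm]⟩

@[simp] lemma kdelta_apply (n m : ℕ) : (kdelta (𝕜 := 𝕜) n) m = if m = n then 1 else 0 := rfl

lemma c0_norm_apply_le (f : C₀(ℕ, 𝕜)) (k : ℕ) : ‖f k‖ ≤ ‖f‖ := by
  rw [← ZeroAtInftyContinuousMap.norm_toBCF_eq_norm]
  exact f.toBCF.norm_coe_le_norm k

lemma c0_norm_le {f : C₀(ℕ, 𝕜)} {M : ℝ} (hM : 0 ≤ M) (h : ∀ k, ‖f k‖ ≤ M) : ‖f‖ ≤ M := by
  rw [← ZeroAtInftyContinuousMap.norm_toBCF_eq_norm]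
  exact (BoundedContinuousFunction.norm_le hM).2 h

lemma sum_apply' {F : Finset ℕ} (g : ℕ → C₀(ℕ, 𝕜)) (k : ℕ) :
    (∑ n ∈ F, g n) k = ∑ n ∈ F, g n k :=
  map_sum (evalHom k) g F


variable {Y : Type*} [NormedAddCommGroup Y] [NormedSpace 𝕜 Y]

lemma exists_c0_seq (W : Submodule 𝕜 Y) (e : ↥W ≃L[𝕜] C₀(ℕ, 𝕜)) :
    ∃ (x : ℕ → Y) (A B : ℝ), 0 < A ∧ 0 < B ∧ (∀ n, x n ∈ W) ∧
      ∀ (F : Finset ℕ) (b : ℕ → 𝕜),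
        A * ((F.sup fun n => ‖b n‖₊ : ℝ≥0) : ℝ) ≤ ‖∑ n ∈ F, b n • x n‖ ∧
        ‖∑ n ∈ F, b n • x n‖ ≤ B * ((F.sup fun n => ‖b n‖₊ : ℝ≥0) : ℝ) := by
  set K : ℝ := ‖(e : ↥W →L[𝕜] C₀(ℕ, 𝕜))‖ + 1 with hK
  set B : ℝ := ‖(e.symm : C₀(ℕ, 𝕜) →L[𝕜] ↥W)‖ + 1 with hB
  have hKpos : 0 < K := by positivity
  have hBpos : 0 < B := by positivity
  refine ⟨fun n => ((e.symm (kdelta n) : ↥W) : Y), K⁻¹, B, by positivity, hBpos,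
    fun n => (e.symm (kdelta n)).2, ?_⟩
  intro F b
  set wF : ↥W := ∑ n ∈ F, b n • e.symm (kdelta n) with hwF
  have hcoe : ∑ n ∈ F, b n • ((e.symm (kdelta n) : ↥W) : Y) = (wF : Y) := by
    rw [hwF]; push_cast; rfl
  have hewF : e wF = ∑ n ∈ F, b n • kdelta n := by
    rw [hwF, map_sum]; simp
  have heval : ∀ n ∈ F, (e wF) n = b n := by
    intro n hn
    rw [hewF, sum_apply']
    rw [Finset.sum_eq_single_of_mem n hn]
    · simp
    · intro m hm hmn
      simp [ZeroAtInftyContinuousMap.smul_apply, Ne.symm hmn]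
  have hnorm_eval : ∀ n ∈ F, ‖b n‖ ≤ ‖e wF‖ := by
    intro n hn
    rw [← heval n hn]
    exact c0_norm_apply_le _ n
  have hnorm_le : ‖e wF‖ ≤ ((F.sup fun n => ‖b n‖₊ : ℝ≥0) : ℝ) := by
    refine c0_norm_le (by positivity) fun k => ?_
    rw [hewF, sum_apply']
    by_cases hk : k ∈ F
    · rw [Finset.sum_eq_single_of_mem k hk]
      · simpa using le_supn hk
      · intro m hm hmk
        simp [ZeroAtInftyContinuousMap.smul_apply, Ne.symm hmk]
    · rw [Finset.sum_eq_zero]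
      · simp
      · intro m hm
        have : k ≠ m := fun h => hk (h ▸ hm)
        simp [ZeroAtInftyContinuousMap.smul_apply, this]
  rw [hcoe]
  constructor
  · -- lower bound
    have h1 : ((F.sup fun n => ‖b n‖₊ : ℝ≥0) : ℝ) ≤ K * ‖(wF : Y)‖ := by
      refine supn_le (by positivity) fun n hn => ?_
      calc ‖b n‖ ≤ ‖e wF‖ := hnorm_eval n hn
        _ ≤ ‖(e : ↥W →L[𝕜] C₀(ℕ, 𝕜))‖ * ‖wF‖ := (e : ↥W →L[𝕜] C₀(ℕ, 𝕜)).le_opNorm wF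
        _ ≤ K * ‖(wF : Y)‖ := by
            have : ‖wF‖ = ‖(wF : Y)‖ := rfl
            rw [← this]
            exact mul_le_mul_of_nonneg_right (by simp [hK]) (norm_nonneg _)
    rw [inv_mul_le_iff₀ hKpos]
    linarith [h1]
  · -- upper bound
    have : ‖(wF : Y)‖ = ‖wF‖ := rfl
    rw [this]
    calc ‖wF‖ = ‖e.symm (e wF)‖ := by simp
      _ ≤ ‖(e.symm : C₀(ℕ, 𝕜) →L[𝕜] ↥W)‖ * ‖e wF‖ :=
          (e.symm : C₀(ℕ, 𝕜) →L[𝕜] ↥W).le_opNorm _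
      _ ≤ B * ((F.sup fun n => ‖b n‖₊ : ℝ≥0) : ℝ) := by
          apply mul_le_mul (by simp [hB]) hnorm_le (norm_nonneg _) (le_of_lt hBpos)


section blocks
variable (x : ℕ → Y) (m₀ : ℕ) (τ : ℝ)
  (hτ : ∀ (F : Finset ℕ) (b : ℕ → 𝕜), (∀ n ∈ F, m₀ ≤ n) → (∀ n, ‖b n‖ ≤ 1) →
    ‖∑ n ∈ F, b n • x n‖ ≤ τ)
  (J : ℕ → Finset ℕ) (β : ℕ → ℕ → 𝕜)
  (hJm : ∀ k, ∀ n ∈ J k, m₀ ≤ n)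
  (hJd : ∀ i j, i ≠ j → Disjoint (J i) (J j))
  (hβ : ∀ k n, ‖β k n‖ ≤ 1)

include hτ in
lemma tau_nonneg : 0 ≤ τ := by
  have := hτ ∅ 0 (by simp) (by simp)
  simpa using this

include hτ hJm hJd hβ in
lemma gen_upper (G : Finset ℕ) (a : ℕ → 𝕜) :
    ‖∑ k ∈ G, a k • ∑ n ∈ J k, β k n • x n‖ ≤
      τ * ((G.sup fun k => ‖a k‖₊ : ℝ≥0) : ℝ) := by
  have hτ0 : 0 ≤ τ := tau_nonneg x m₀ τ hτ
  set M : ℝ := ((G.sup fun k => ‖a k‖₊ : ℝ≥0) : ℝ) with hM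
  have hM0 : 0 ≤ M := NNReal.coe_nonneg _
  rcases eq_or_lt_of_le hM0 with hMz | hMpos
  · -- M = 0, all coefficients vanish
    have : ∀ k ∈ G, a k = 0 := fun k hk =>
      norm_eq_zero.1 (le_antisymm (by rw [hMz] at *; exact le_supn hk) (norm_nonneg _))
    rw [Finset.sum_eq_zero fun k hk => by rw [this k hk, zero_smul]]
    rw [norm_zero]
    positivity
  · set b' : ℕ → 𝕜 := fun n =>
      ((M : 𝕜))⁻¹ * ∑ k ∈ G, if n ∈ J k then a k * β k n else 0 with hb'
    have hMk : ‖((M : ℝ) : 𝕜)‖ = M := by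
      rw [RCLike.norm_ofReal, abs_of_nonneg hM0]
    have hinner : ∀ n, ‖∑ k ∈ G, if n ∈ J k then a k * β k n else 0‖ ≤ M := by
      intro n
      by_cases hex : ∃ k ∈ G, n ∈ J k
      · rcases hex with ⟨k₀, hk₀G, hk₀⟩
        rw [Finset.sum_eq_single_of_mem k₀ hk₀G]
        · rw [if_pos hk₀]
          calc ‖a k₀ * β k₀ n‖ = ‖a k₀‖ * ‖β k₀ n‖ := norm_mul _ _
            _ ≤ M * 1 := mul_le_mul (le_supn hk₀G) (hβ _ _) (norm_nonneg _) hM0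
            _ = M := mul_one M
        · intro k hkG hkne
          rw [if_neg]
          exact fun hn => (Finset.disjoint_left.1 (hJd k k₀ hkne) hn) hk₀
      · rw [Finset.sum_eq_zero]
        · simp [hM0]
        · intro k hk
          rw [if_neg (fun hn => hex ⟨k, hk, hn⟩)]
    have hb'1 : ∀ n, ‖b' n‖ ≤ 1 := by
      intro n
      rw [hb']
      simp only []
      rw [norm_mul, norm_inv, hMk]
      rw [inv_mul_le_iff₀ hMpos, mul_one]
      exact hinner n
    have hkey : ∑ n ∈ G.biUnion J, b' n • x n =
        ((M : ℝ) : 𝕜)⁻¹ • ∑ k ∈ G, a k • ∑ n ∈ J k, β k n • x n := by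
      rw [Finset.smul_sum]
      rw [hb']
      simp only [mul_smul, ← Finset.smul_sum]
      congr 1
      calc ∑ n ∈ G.biUnion J, (∑ k ∈ G, if n ∈ J k then a k * β k n else 0) • x n
          = ∑ n ∈ G.biUnion J, ∑ k ∈ G, (if n ∈ J k then a k * β k n else 0) • x n := by
            refine Finset.sum_congr rfl fun n _ => ?_
            rw [Finset.sum_smul]
        _ = ∑ k ∈ G, ∑ n ∈ G.biUnion J, (if n ∈ J k then a k * β k n else 0) • x n :=
            Finset.sum_comm
        _ = ∑ k ∈ G, a k • ∑ n ∈ J k, β k n • x n := by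
            refine Finset.sum_congr rfl fun k hk => ?_
            rw [show (∑ n ∈ G.biUnion J, (if n ∈ J k then a k * β k n else 0) • x n)
                = ∑ n ∈ G.biUnion J, (if n ∈ J k then (a k * β k n) • x n else 0) by
              refine Finset.sum_congr rfl fun n _ => ?_
              split <;> simp]
            rw [Finset.sum_ite_mem]
            have hsub : J k ⊆ G.biUnion J := fun n hn => Finset.mem_biUnion.2 ⟨k, hk, hn⟩
            rw [Finset.inter_eq_right.2 hsub, Finset.smul_sum]
            refine Finset.sum_congr rfl fun n _ => ?_
            rw [mul_smul]
    have hmem : ∀ n ∈ G.biUnion J, m₀ ≤ n := by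
      intro n hn
      rcases Finset.mem_biUnion.1 hn with ⟨k, _, hnk⟩
      exact hJm k n hnk
    have := hτ (G.biUnion J) b' hmem hb'1
    rw [hkey] at this
    rw [norm_smul, norm_inv, hMk, inv_mul_le_iff₀ hMpos] at this
    linarith [this]

include hτ hJm hJd hβ in
lemma gen_lower (L : ℝ)
    (hL : ∀ k, L ≤ ‖∑ n ∈ J k, β k n • x n‖)
    (G : Finset ℕ) (a : ℕ → 𝕜) (j : ℕ) (hj : j ∈ G) :
    (2 * L - τ) * ‖a j‖ ≤ ‖∑ k ∈ G, a k • ∑ n ∈ J k, β k n • x n‖ := by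
  rcases le_or_gt (2 * L - τ) 0 with hneg | hpos
  · exact le_trans (mul_nonpos_of_nonpos_of_nonneg hneg (norm_nonneg _)) (norm_nonneg _)
  set v : ℕ → Y := fun k => ∑ n ∈ J k, β k n • x n with hv
  set M : ℝ := ((G.sup fun k => ‖a k‖₊ : ℝ≥0) : ℝ) with hM
  obtain ⟨k₀, hk₀G, hk₀⟩ := Finset.exists_mem_eq_sup G ⟨j, hj⟩ (fun k => ‖a k‖₊)
  have hMak : M = ‖a k₀‖ := by rw [hM, hk₀]; rfl
  set a' : ℕ → 𝕜 := fun k => if k = k₀ then a k else -a k with ha'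
  have hsum2 : (∑ k ∈ G, a k • v k) + ∑ k ∈ G, a' k • v k = (2 : 𝕜) • (a k₀ • v k₀) := by
    rw [← Finset.sum_add_distrib]
    rw [Finset.sum_eq_single_of_mem k₀ hk₀G]
    · simp [ha', two_smul]
    · intro k hk hkne
      rw [ha']; simp only [if_neg hkne]; simp
  have hup : ‖∑ k ∈ G, a' k • v k‖ ≤ τ * M := by
    have h := gen_upper x m₀ τ hτ J β hJm hJd hβ G a'
    have hsupeq : (G.sup fun k => ‖a' k‖₊) = G.sup fun k => ‖a k‖₊ := by
      refine Finset.sup_congr rfl fun k _ => ?_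
      simp only [ha']; split <;> simp
    rw [hsupeq] at h
    exact h
  have h2 : ‖(2 : 𝕜) • (a k₀ • v k₀)‖ = 2 * (‖a k₀‖ * ‖v k₀‖) := by
    rw [norm_smul, norm_smul]
    norm_num
  have hLv : L ≤ ‖v k₀‖ := hL k₀
  have htri : ‖(2 : 𝕜) • (a k₀ • v k₀)‖ ≤ ‖∑ k ∈ G, a k • v k‖ + ‖∑ k ∈ G, a' k • v k‖ := by
    rw [← hsum2]; exact norm_add_le _ _
  have haj : ‖a j‖ ≤ M := by rw [hM]; exact le_supn hj
  have hMnn : 0 ≤ M := NNReal.coe_nonneg _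
  have hτ0 : 0 ≤ τ := tau_nonneg x m₀ τ hτ
  have hchain : (2 * L - τ) * M ≤ ‖∑ k ∈ G, a k • v k‖ := by
    have h1 : 2 * (‖a k₀‖ * ‖v k₀‖) ≥ 2 * (M * L) := by
      rw [hMak]
      have := mul_le_mul_of_nonneg_left hLv (norm_nonneg (a k₀))
      nlinarith [norm_nonneg (a k₀)]
    nlinarith [htri, hup, h2]
  calc (2 * L - τ) * ‖a j‖ ≤ (2 * L - τ) * M :=
        mul_le_mul_of_nonneg_left haj (le_of_lt hpos)
    _ ≤ _ := hchain

end blocks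

lemma exists_block_system (x : ℕ → Y) (A B : ℝ) (hA : 0 < A)
    (hsand : ∀ (F : Finset ℕ) (b : ℕ → 𝕜),
      A * ((F.sup fun n => ‖b n‖₊ : ℝ≥0) : ℝ) ≤ ‖∑ n ∈ F, b n • x n‖ ∧
      ‖∑ n ∈ F, b n • x n‖ ≤ B * ((F.sup fun n => ‖b n‖₊ : ℝ≥0) : ℝ))
    (ε : ℝ) (hε : 0 < ε) (hε3 : ε < 1/3) :
    ∃ (m₀ : ℕ) (τ sI : ℝ) (F : ℕ → Finset ℕ) (b : ℕ → ℕ → 𝕜),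
      0 < sI ∧ sI ≤ τ ∧ τ ≤ sI * (1 + ε) ∧
      (∀ (F' : Finset ℕ) (b' : ℕ → 𝕜), (∀ n ∈ F', m₀ ≤ n) → (∀ n, ‖b' n‖ ≤ 1) →
        ‖∑ n ∈ F', b' n • x n‖ ≤ τ) ∧
      (∀ k, ∀ n ∈ F k, m₀ ≤ n) ∧
      (∀ i j, i ≠ j → Disjoint (F i) (F j)) ∧
      (∀ k n, ‖b k n‖ ≤ 1) ∧
      (∀ k, sI * (1 - ε) ≤ ‖∑ n ∈ F k, b k n • x n‖) := by
  have hB : 0 < B := by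
    have h1 := (hsand {0} fun _ => 1).1
    have h2 := (hsand {0} fun _ => 1).2
    simp only [Finset.sup_singleton, Finset.sum_singleton, one_smul, nnnorm_one,
      NNReal.coe_one, mul_one] at h1 h2
    nlinarith
  set SBlk : ℕ → Set ℝ := fun m => {r : ℝ | ∃ (F : Finset ℕ) (b : ℕ → 𝕜),
    (∀ n ∈ F, m ≤ n) ∧ (∀ n, ‖b n‖ ≤ 1) ∧ r = ‖∑ n ∈ F, b n • x n‖} with hSBlk
  have hne : ∀ m, (SBlk m).Nonempty := by
    intro m
    exact ⟨‖∑ n ∈ ({m} : Finset ℕ), (1 : 𝕜) • x n‖, {m}, fun _ => 1,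
      by simp, by simp, rfl⟩
  have hbdd : ∀ m, ∀ r ∈ SBlk m, r ≤ B := by
    rintro m r ⟨F, b, _, hb1, rfl⟩
    calc ‖∑ n ∈ F, b n • x n‖ ≤ B * ((F.sup fun n => ‖b n‖₊ : ℝ≥0) : ℝ) := (hsand F b).2
      _ ≤ B * 1 := mul_le_mul_of_nonneg_left (supn_le zero_le_one fun n _ => hb1 n) hB.le
      _ = B := mul_one B
  have hbddAbove : ∀ m, BddAbove (SBlk m) := fun m => ⟨B, fun r hr => hbdd m r hr⟩
  set s : ℕ → ℝ := fun m => sSup (SBlk m) with hs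
  have hsA : ∀ m, A ≤ s m := by
    intro m
    have hmem : ‖∑ n ∈ ({m} : Finset ℕ), (1 : 𝕜) • x n‖ ∈ SBlk m :=
      ⟨{m}, fun _ => 1, by simp, by simp, rfl⟩
    have hAx : A ≤ ‖∑ n ∈ ({m} : Finset ℕ), (1 : 𝕜) • x n‖ := by
      have := (hsand {m} fun _ => 1).1
      simpa using this
    exact le_trans hAx (le_csSup (hbddAbove m) hmem)
  have hanti : ∀ m m', m ≤ m' → s m' ≤ s m := by
    intro m m' hmm
    refine csSup_le_csSup (hbddAbove m) (hne m') ?_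
    rintro r ⟨F, b, hF, hb, rfl⟩
    exact ⟨F, b, fun n hn => le_trans hmm (hF n hn), hb, rfl⟩
  set sI : ℝ := ⨅ m, s m with hsI
  have hbddBelow : BddBelow (Set.range s) := ⟨A, by rintro r ⟨m, rfl⟩; exact hsA m⟩
  have hsIA : A ≤ sI := le_ciInf hsA
  have hsIpos : 0 < sI := lt_of_lt_of_le hA hsIA
  have hsIle : ∀ m, sI ≤ s m := fun m => ciInf_le hbddBelow m
  -- choose m₀
  have : (⨅ m, s m) < sI * (1 + ε) := by
    rw [← hsI]; nlinarith
  obtain ⟨m₀, hm₀⟩ := exists_lt_of_ciInf_lt this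
  set τ : ℝ := s m₀ with hτdef
  have hτub : ∀ (F' : Finset ℕ) (b' : ℕ → 𝕜), (∀ n ∈ F', m₀ ≤ n) → (∀ n, ‖b' n‖ ≤ 1) →
      ‖∑ n ∈ F', b' n • x n‖ ≤ τ := by
    intro F' b' h1 h2
    exact le_csSup (hbddAbove m₀) ⟨F', b', h1, h2, rfl⟩
  -- block existence at each level
  have hex : ∀ m, ∃ (F : Finset ℕ) (b : ℕ → 𝕜),
      (∀ n ∈ F, max m m₀ ≤ n) ∧ (∀ n, ‖b n‖ ≤ 1) ∧
      sI * (1 - ε) < ‖∑ n ∈ F, b n • x n‖ := by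
    intro m
    have hlt : sI * (1 - ε) < s (max m m₀) := by
      have := hsIle (max m m₀)
      nlinarith
    obtain ⟨r, hrmem, hrgt⟩ := exists_lt_of_lt_csSup (hne (max m m₀)) hlt
    obtain ⟨F, b, hF, hb, rfl⟩ := hrmem
    exact ⟨F, b, hF, hb, hrgt⟩
  set ch : ℕ → Finset ℕ × (ℕ → 𝕜) := fun m =>
    ⟨(hex m).choose, (hex m).choose_spec.choose⟩ with hch
  have hch1 : ∀ m, ∀ n ∈ (ch m).1, max m m₀ ≤ n :=
    fun m => (hex m).choose_spec.choose_spec.1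
  have hch2 : ∀ m n, ‖(ch m).2 n‖ ≤ 1 := fun m => (hex m).choose_spec.choose_spec.2.1
  have hch3 : ∀ m, sI * (1 - ε) < ‖∑ n ∈ (ch m).1, (ch m).2 n • x n‖ :=
    fun m => (hex m).choose_spec.choose_spec.2.2
  -- starts
  set start : ℕ → ℕ := fun k => Nat.rec 0
    (fun _ st => max st ((ch st).1.sup id) + 1) k with hstart
  have hstartsucc : ∀ k, start (k + 1) = max (start k) ((ch (start k)).1.sup id) + 1 :=
    fun k => rfl
  have hstartmono : StrictMono start := by
    apply strictMono_nat_of_lt_succ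
    intro k
    rw [hstartsucc]
    omega
  set F : ℕ → Finset ℕ := fun k => (ch (start k)).1 with hF
  set b : ℕ → ℕ → 𝕜 := fun k => (ch (start k)).2 with hb
  have hFlt : ∀ k, ∀ n ∈ F k, n < start (k + 1) := by
    intro k n hn
    rw [hstartsucc]
    have : n ≤ ((ch (start k)).1).sup id := Finset.le_sup (f := id) hn
    omega
  have hFge : ∀ k, ∀ n ∈ F k, start k ≤ n := by
    intro k n hn
    exact le_trans (le_max_left _ _) (hch1 (start k) n hn)
  refine ⟨m₀, τ, sI, F, b, hsIpos, hsIle m₀, le_of_lt hm₀, hτub, ?_, ?_, ?_, ?_⟩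
  · intro k n hn
    exact le_trans (le_max_right _ _) (hch1 (start k) n hn)
  · -- disjoint
    have key : ∀ i j, i < j → Disjoint (F i) (F j) := by
      intro i j hij
      rw [Finset.disjoint_left]
      intro n hni hnj
      have h1 : n < start (i + 1) := hFlt i n hni
      have h2 : start (i + 1) ≤ start j := hstartmono.le_iff_le.2 hij
      have h3 : start j ≤ n := hFge j n hnj
      omega
    intro i j hij
    rcases lt_or_gt_of_ne hij with h | h
    · exact key i j h
    · exact (key j i h).symm
  · exact fun k => hch2 (start k)
  · exact fun k => le_of_lt (hch3 (start k))


lemma exists_biorth (u : ℕ → Y) (r : ℝ) (hr : 0 < r)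
    (hcoord : ∀ (G : Finset ℕ) (a : ℕ → 𝕜) (j : ℕ), j ∈ G →
      r * ‖a j‖ ≤ ‖∑ k ∈ G, a k • u k‖) :
    ∃ ψ : ℕ → (Y →L[𝕜] 𝕜), (∀ k, ‖ψ k‖ ≤ r⁻¹) ∧
      ∀ k j, ψ k (u j) = if k = j then 1 else 0 := by
  have hli : LinearIndependent 𝕜 u := by
    rw [linearIndependent_iff]
    intro l hl
    rw [Finsupp.linearCombination_apply, Finsupp.sum] at hl
    ext j
    by_cases hj : j ∈ l.support
    · have := hcoord l.support l j hj
      rw [hl, norm_zero] at this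
      have : ‖l j‖ ≤ 0 := by nlinarith
      simpa using norm_eq_zero.1 (le_antisymm this (norm_nonneg _))
    · simpa using Finsupp.notMem_support_iff.1 hj
  set V : Submodule 𝕜 Y := Submodule.span 𝕜 (Set.range u) with hV
  set Bsp : Module.Basis ℕ 𝕜 ↥V := Module.Basis.span hli with hBsp
  have hreprbound : ∀ (k : ℕ) (ξ : ↥V), ‖Bsp.coord k ξ‖ ≤ r⁻¹ * ‖ξ‖ := by
    intro k ξ
    have hrepr : (ξ : Y) = ∑ i ∈ (Bsp.repr ξ).support, (Bsp.repr ξ) i • u i := by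
      conv_lhs => rw [← Bsp.linearCombination_repr ξ]
      rw [Finsupp.linearCombination_apply, Finsupp.sum]
      push_cast
      refine Finset.sum_congr rfl fun i _ => ?_
      rw [Module.Basis.span_apply]
    by_cases hk : k ∈ (Bsp.repr ξ).support
    · have := hcoord (Bsp.repr ξ).support (fun i => Bsp.repr ξ i) k hk
      rw [← hrepr] at this
      rw [Module.Basis.coord_apply]
      have hno : ‖(ξ : Y)‖ = ‖ξ‖ := rfl
      rw [hno] at this
      rw [inv_mul_eq_div, le_div_iff₀ hr]
      linarith
    · rw [Module.Basis.coord_apply, Finsupp.notMem_support_iff.1 hk, norm_zero]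
      positivity
  set coordCLM : ℕ → (↥V →L[𝕜] 𝕜) := fun k =>
    LinearMap.mkContinuous (Bsp.coord k) r⁻¹ (hreprbound k) with hcoordCLM
  have hHB : ∀ k, ∃ g : Y →L[𝕜] 𝕜, (∀ ξ : ↥V, g ξ = coordCLM k ξ) ∧ ‖g‖ = ‖coordCLM k‖ :=
    fun k => exists_extension_norm_eq V (coordCLM k)
  refine ⟨fun k => (hHB k).choose, fun k => ?_, fun k j => ?_⟩
  · rw [(hHB k).choose_spec.2]
    exact LinearMap.mkContinuous_norm_le _ (by positivity) _
  · have hmem : u j ∈ V := Submodule.subset_span (Set.mem_range_self j)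
    have := (hHB k).choose_spec.1 ⟨u j, hmem⟩
    rw [this]
    have hj : (⟨u j, hmem⟩ : ↥V) = Bsp j := (Module.Basis.span_apply hli j).symm
    rw [hcoordCLM]
    simp only [LinearMap.mkContinuous_apply]
    rw [hj, Module.Basis.coord_apply, Module.Basis.repr_self, Finsupp.single_apply]
    simp [eq_comm]


variable [CompleteSpace Y]

lemma exists_P (W : Submodule 𝕜 Y) (hWc : IsClosed (W : Set Y))
    (w : ℕ → Y) (hwW : ∀ k, w k ∈ W)
    (φ : ℕ → (Y →L[𝕜] 𝕜)) (Kφ θ : ℝ) (hθ : 0 ≤ θ) (hKφ : 0 ≤ Kφ)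
    (hφnorm : ∀ k, ‖φ k‖ ≤ Kφ)
    (hφ0 : ∀ y : Y, Tendsto (fun k => φ k y) atTop (nhds 0))
    (hφw : ∀ k j, φ k (w j) = if k = j then 1 else 0)
    (hwsum : ∀ (G : Finset ℕ) (a : ℕ → 𝕜),
      ‖∑ k ∈ G, a k • w k‖ ≤ θ * ((G.sup fun k => ‖a k‖₊ : ℝ≥0) : ℝ)) :
    ∃ P : Y →L[𝕜] Y, P ∘L P = P ∧ ‖P‖ ≤ θ * Kφ ∧ Set.range ⇑P ⊆ (W : Set Y) ∧
      ∃ e : ↥(LinearMap.range (P : Y →ₗ[𝕜] Y)) ≃L[𝕜] C₀(ℕ, 𝕜),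
        ‖(e : ↥(LinearMap.range (P : Y →ₗ[𝕜] Y)) →L[𝕜] C₀(ℕ, 𝕜))‖ *
          ‖(e.symm : C₀(ℕ, 𝕜) →L[𝕜] ↥(LinearMap.range (P : Y →ₗ[𝕜] Y)))‖ ≤ θ * Kφ := by
  classical
  -- the "analysis" map S
  set Sfun : Y → C₀(ℕ, 𝕜) := fun y =>
    ⟨⟨fun k => φ k y, continuous_of_discreteTopology⟩, by
      rw [cocompact_eq_atTop]; exact hφ0 y⟩ with hSfun
  have hSfun_apply : ∀ (y : Y) (k : ℕ), Sfun y k = φ k y := fun _ _ => rfl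
  set Slin : Y →ₗ[𝕜] C₀(ℕ, 𝕜) :=
    { toFun := Sfun
      map_add' := fun y z => by
        ext k
        simp [hSfun_apply, ZeroAtInftyContinuousMap.add_apply]
      map_smul' := fun a y => by
        ext k
        simp [hSfun_apply, ZeroAtInftyContinuousMap.smul_apply] } with hSlin
  have hSbound : ∀ y, ‖Slin y‖ ≤ Kφ * ‖y‖ := by
    intro y
    refine c0_norm_le (by positivity) fun k => ?_
    calc ‖φ k y‖ ≤ ‖φ k‖ * ‖y‖ := (φ k).le_opNorm y
      _ ≤ Kφ * ‖y‖ := mul_le_mul_of_nonneg_right (hφnorm k) (norm_nonneg y)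
  set S : Y →L[𝕜] C₀(ℕ, 𝕜) := Slin.mkContinuous Kφ hSbound with hS
  have hS_apply : ∀ (y : Y) (k : ℕ), S y k = φ k y := fun _ _ => rfl
  have hSnorm : ‖S‖ ≤ Kφ := Slin.mkContinuous_norm_le hKφ hSbound
  -- summability
  have hsum : ∀ c : C₀(ℕ, 𝕜), Summable fun k => c k • w k := by
    intro c
    rw [summable_iff_vanishing]
    intro e he
    obtain ⟨ε', hε', hball⟩ := Metric.mem_nhds_iff.1 he
    have hc0 : Tendsto (fun k => c k) atTop (nhds 0) := by
      have := zero_at_infty c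
      rwa [cocompact_eq_atTop] at this
    obtain ⟨N, hN⟩ : ∃ N, ∀ k ≥ N, ‖c k‖ < ε' / (θ + 1) := by
      have := (Metric.tendsto_atTop.1 hc0) (ε' / (θ + 1)) (by positivity)
      simpa [dist_zero_right] using this
    refine ⟨Finset.range N, fun t ht => hball ?_⟩
    rw [Metric.mem_ball, dist_zero_right]
    have hkg : ∀ k ∈ t, N ≤ k := by
      intro k hk
      by_contra hlt
      exact (Finset.disjoint_left.1 ht hk) (Finset.mem_range.2 (by omega))
    calc ‖∑ k ∈ t, c k • w k‖ ≤ θ * ((t.sup fun k => ‖c k‖₊ : ℝ≥0) : ℝ) := hwsum t _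
      _ ≤ θ * (ε' / (θ + 1)) := by
          refine mul_le_mul_of_nonneg_left (supn_le (by positivity) fun k hk =>
            (hN k (hkg k hk)).le) hθ
      _ < ε' := by
          have h0 : (0:ℝ) < θ + 1 := by linarith
          rw [← mul_div_assoc, div_lt_iff₀ h0]
          nlinarith
  -- the "synthesis" map T
  set Tlin : C₀(ℕ, 𝕜) →ₗ[𝕜] Y :=
    { toFun := fun c => ∑' k, c k • w k
      map_add' := fun c d => by
        rw [← Summable.tsum_add (hsum c) (hsum d)]
        refine tsum_congr fun k => ?_
        simp [ZeroAtInftyContinuousMap.add_apply, add_smul]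
      map_smul' := fun a c => by
        simp only [RingHom.id_apply]
        rw [← Summable.tsum_const_smul a (hsum c)]
        refine tsum_congr fun k => ?_
        simp [ZeroAtInftyContinuousMap.smul_apply, smul_smul] } with hTlin
  have hTlin_apply : ∀ c : C₀(ℕ, 𝕜), Tlin c = ∑' k, c k • w k := fun _ => rfl
  have hTbound : ∀ c, ‖Tlin c‖ ≤ θ * ‖c‖ := by
    intro c
    have hhs := (hsum c).hasSum
    have hnorm : Tendsto (fun G : Finset ℕ => ‖∑ k ∈ G, c k • w k‖) atTop
        (nhds ‖Tlin c‖) := (continuous_norm.tendsto _).comp hhs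
    refine le_of_tendsto hnorm (Eventually.of_forall fun G => ?_)
    calc ‖∑ k ∈ G, c k • w k‖ ≤ θ * ((G.sup fun k => ‖c k‖₊ : ℝ≥0) : ℝ) := hwsum G _
      _ ≤ θ * ‖c‖ := mul_le_mul_of_nonneg_left
          (supn_le (norm_nonneg c) fun k _ => c0_norm_apply_le c k) hθ
  set T : C₀(ℕ, 𝕜) →L[𝕜] Y := Tlin.mkContinuous θ hTbound with hT
  have hT_apply : ∀ c : C₀(ℕ, 𝕜), T c = ∑' k, c k • w k := fun _ => rfl
  have hTnorm : ‖T‖ ≤ θ := Tlin.mkContinuous_norm_le hθ hTbound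
  -- S ∘ T = id
  have hST : ∀ c : C₀(ℕ, 𝕜), S (T c) = c := by
    intro c
    ext k
    rw [hS_apply, hT_apply]
    rw [ContinuousLinearMap.map_tsum (φ k) (hsum c)]
    have : ∀ j, φ k (c j • w j) = c j * (if k = j then 1 else 0) := by
      intro j
      rw [map_smul, hφw k j, smul_eq_mul]
    rw [tsum_congr this]
    rw [tsum_eq_single k]
    · simp
    · intro j hjk
      simp [Ne.symm hjk]
  set P : Y →L[𝕜] Y := T ∘L S with hP
  have hP_apply : ∀ y, P y = T (S y) := fun _ => rfl
  have hProj : ∀ y, P (P y) = P y := by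
    intro y
    rw [hP_apply, hP_apply, hST]
  have hPP : P ∘L P = P := by
    ext y
    exact hProj y
  have hPnorm : ‖P‖ ≤ θ * Kφ := by
    calc ‖P‖ ≤ ‖T‖ * ‖S‖ := ContinuousLinearMap.opNorm_comp_le T S
      _ ≤ θ * Kφ := mul_le_mul hTnorm hSnorm (norm_nonneg S) hθ
  have hrangeW : ∀ y, P y ∈ W := by
    intro y
    rw [hP_apply, hT_apply]
    refine hWc.mem_of_tendsto (hsum (S y)).hasSum
      (Eventually.of_forall fun G => ?_)
    exact Submodule.sum_mem W fun k _ => Submodule.smul_mem W _ (hwW k)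
  have hPT : ∀ c, P (T c) = T c := by
    intro c
    rw [hP_apply, hST]
  set R : Submodule 𝕜 Y := LinearMap.range (P : Y →ₗ[𝕜] Y) with hR
  have hmemR : ∀ c, T c ∈ R := fun c => ⟨T c, hPT c⟩
  set f₁ : ↥R →L[𝕜] C₀(ℕ, 𝕜) := S.comp (Submodule.subtypeL R) with hf₁
  set f₂ : C₀(ℕ, 𝕜) →L[𝕜] ↥R := T.codRestrict R hmemR with hf₂
  have h₁ : Function.LeftInverse f₂ f₁ := by
    rintro ⟨ξ, hξ⟩
    obtain ⟨z, hz⟩ := hξ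
    apply Subtype.ext
    have : (P : Y →ₗ[𝕜] Y) z = P z := rfl
    rw [this] at hz
    simp only [hf₂, hf₁, ContinuousLinearMap.coe_codRestrict_apply,
      ContinuousLinearMap.comp_apply, Submodule.subtypeL_apply]
    rw [← hz]
    exact hProj z
  have h₂ : Function.RightInverse f₂ f₁ := by
    intro c
    simp only [hf₁, hf₂, ContinuousLinearMap.comp_apply, Submodule.subtypeL_apply,
      ContinuousLinearMap.coe_codRestrict_apply]
    exact hST c
  refine ⟨P, hPP, hPnorm, ?_, ContinuousLinearEquiv.equivOfInverse f₁ f₂ h₁ h₂, ?_⟩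
  · rintro y ⟨z, rfl⟩
    exact hrangeW z
  · have hcoe1 : ((ContinuousLinearEquiv.equivOfInverse f₁ f₂ h₁ h₂ :
        ↥R ≃L[𝕜] C₀(ℕ, 𝕜)) : ↥R →L[𝕜] C₀(ℕ, 𝕜)) = f₁ := rfl
    have hcoe2 : (((ContinuousLinearEquiv.equivOfInverse f₁ f₂ h₁ h₂).symm :
        C₀(ℕ, 𝕜) ≃L[𝕜] ↥R) : C₀(ℕ, 𝕜) →L[𝕜] ↥R) = f₂ := rfl
    rw [hcoe1, hcoe2]
    have hn1 : ‖f₁‖ ≤ Kφ := by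
      refine ContinuousLinearMap.opNorm_le_bound _ hKφ fun ξ => ?_
      calc ‖f₁ ξ‖ = ‖S (ξ : Y)‖ := rfl
        _ ≤ ‖S‖ * ‖(ξ : Y)‖ := S.le_opNorm _
        _ ≤ Kφ * ‖ξ‖ := mul_le_mul_of_nonneg_right hSnorm (norm_nonneg _) |>.trans
            (le_of_eq rfl)
    have hn2 : ‖f₂‖ ≤ θ := by
      refine ContinuousLinearMap.opNorm_le_bound _ hθ fun c => ?_
      calc ‖f₂ c‖ = ‖T c‖ := rfl
        _ ≤ θ * ‖c‖ := le_trans (T.le_opNorm c)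
            (mul_le_mul_of_nonneg_right hTnorm (norm_nonneg _))
    calc ‖f₁‖ * ‖f₂‖ ≤ Kφ * θ := mul_le_mul hn1 hn2 (norm_nonneg f₂) hKφ
      _ = θ * Kφ := mul_comm _ _


end St12

open scoped ENNReal ZeroAtInfty
open Filter

/-- Dowling–Randrianantoanina–Turett. Let `Y` be a Banach space whose
dual unit ball is weak* sequentially compact and let `Z` be a closed subspace of `Y`
containing a closed subspace isomorphic to `c₀`. Then for every `C > 1` there is a
projection `P` on `Y` with `‖P‖ ≤ C` whose range is contained in `Z` and is
`C`-isomorphic to `c₀`. -/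
theorem statement12 {𝕜 : Type*} [RCLike 𝕜]
    {Y : Type*} [NormedAddCommGroup Y] [NormedSpace 𝕜 Y] [CompleteSpace Y]
    (hY : ∀ g : ℕ → (Y →L[𝕜] 𝕜), (∀ n, ‖g n‖ ≤ 1) →
      ∃ ρ : ℕ → ℕ, StrictMono ρ ∧ ∃ g₀ : Y →L[𝕜] 𝕜, ‖g₀‖ ≤ 1 ∧
        ∀ y : Y, Tendsto (fun n => g (ρ n) y) atTop (nhds (g₀ y)))
    (Z : Submodule 𝕜 Y) (hZ : IsClosed (Z : Set Y))
    (hc₀ : ∃ W : Submodule 𝕜 Y, W ≤ Z ∧ IsClosed (W : Set Y) ∧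
      Nonempty (↥W ≃L[𝕜] C₀(ℕ, 𝕜)))
    (C : ℝ) (hC : 1 < C) :
    ∃ P : Y →L[𝕜] Y, P ∘L P = P ∧ ‖P‖ ≤ C ∧ Set.range ⇑P ⊆ (Z : Set Y) ∧
      ∃ e : ↥(LinearMap.range (P : Y →ₗ[𝕜] Y)) ≃L[𝕜] C₀(ℕ, 𝕜),
        ‖(e : ↥(LinearMap.range (P : Y →ₗ[𝕜] Y)) →L[𝕜] C₀(ℕ, 𝕜))‖ *
          ‖(e.symm : C₀(ℕ, 𝕜) →L[𝕜] ↥(LinearMap.range (P : Y →ₗ[𝕜] Y)))‖ ≤ C := by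
  classical
  obtain ⟨W, hWZ, hWc, ⟨e₀⟩⟩ := hc₀
  obtain ⟨x, A, B, hA, hB, hxW, hsand⟩ := St12.exists_c0_seq W e₀
  set ε : ℝ := (C - 1) / (3 * C + 1) with hεdef
  have h3C : (0:ℝ) < 3 * C + 1 := by linarith
  have hε : 0 < ε := div_pos (by linarith) h3C
  have hε3 : ε < 1/3 := by rw [hεdef, div_lt_iff₀ h3C]; linarith
  have hkey : 1 + ε = C * (1 - 3 * ε) := by
    rw [hεdef]; field_simp; ring
  obtain ⟨m₀, τ, sI, F, b, hsIpos, hsIτ, hτsI, hτub, hFm, hFd, hb1, hblk⟩ :=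
    St12.exists_block_system x A B hA hsand ε hε hε3
  set u : ℕ → Y := fun k => ∑ n ∈ F k, b k n • x n with hu
  have huW : ∀ k, u k ∈ W := fun k => Submodule.sum_mem W fun n _ => W.smul_mem _ (hxW n)
  set L : ℝ := sI * (1 - ε) with hL
  set r : ℝ := 2 * L - τ with hr
  have hrpos : 0 < r := by rw [hr, hL]; nlinarith
  have hcoord : ∀ (G : Finset ℕ) (a : ℕ → 𝕜) (j : ℕ), j ∈ G →
      r * ‖a j‖ ≤ ‖∑ k ∈ G, a k • u k‖ := by
    intro G a j hj
    exact St12.gen_lower x m₀ τ hτub F b hFm hFd hb1 L hblk G a j hj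
  obtain ⟨ψ, hψn, hψu⟩ := St12.exists_biorth u r hrpos hcoord
  -- weak* sequentially compact: extract subsequence
  set g : ℕ → (Y →L[𝕜] 𝕜) := fun n => ((r : ℝ) : 𝕜) • ψ n with hg
  have hgnorm : ∀ n, ‖g n‖ ≤ 1 := by
    intro n
    rw [hg]
    simp only []
    calc ‖((r : ℝ) : 𝕜) • ψ n‖ ≤ ‖((r : ℝ) : 𝕜)‖ * ‖ψ n‖ := ContinuousLinearMap.opNorm_smul_le _ _
      _ ≤ r * r⁻¹ := by
          rw [RCLike.norm_ofReal, abs_of_pos hrpos]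
          exact mul_le_mul_of_nonneg_left (hψn n) hrpos.le
      _ = 1 := mul_inv_cancel₀ hrpos.ne'
  obtain ⟨ρ, hρ, g₀, -, hconv⟩ := hY g hgnorm
  have hρinj := hρ.injective
  have hψg : ∀ (n : ℕ) (y : Y), ψ n y = ((r : ℝ) : 𝕜)⁻¹ * g n y := by
    intro n y
    rw [hg]
    simp only [ContinuousLinearMap.smul_apply, smul_eq_mul]
    rw [← mul_assoc, inv_mul_cancel₀, one_mul]
    exact (RCLike.ofReal_ne_zero).2 hrpos.ne'
  set φ : ℕ → (Y →L[𝕜] 𝕜) := fun k => ψ (ρ (2*k)) - ψ (ρ (2*k+1)) with hφ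
  have hφnorm : ∀ k, ‖φ k‖ ≤ 2 * r⁻¹ := by
    intro k
    rw [hφ]
    calc ‖ψ (ρ (2*k)) - ψ (ρ (2*k+1))‖ ≤ ‖ψ (ρ (2*k))‖ + ‖ψ (ρ (2*k+1))‖ := norm_sub_le _ _
      _ ≤ 2 * r⁻¹ := by
          have h1 := hψn (ρ (2*k)); have h2 := hψn (ρ (2*k+1)); linarith
  have h2k : Tendsto (fun k : ℕ => 2*k) atTop atTop :=
    StrictMono.tendsto_atTop (fun a b h => by omega)
  have h2k1 : Tendsto (fun k : ℕ => 2*k+1) atTop atTop :=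
    StrictMono.tendsto_atTop (fun a b h => by omega)
  have hφ0 : ∀ y : Y, Tendsto (fun k => φ k y) atTop (nhds 0) := by
    intro y
    have t1 : Tendsto (fun k : ℕ => g (ρ (2*k)) y) atTop (nhds (g₀ y)) := (hconv y).comp h2k
    have t2 : Tendsto (fun k : ℕ => g (ρ (2*k+1)) y) atTop (nhds (g₀ y)) := (hconv y).comp h2k1
    have t3 := (t1.sub t2).const_mul (((r : ℝ) : 𝕜)⁻¹)
    simp only [sub_self, mul_zero] at t3
    refine t3.congr fun k => ?_
    rw [hφ]
    simp only [ContinuousLinearMap.sub_apply]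
    rw [hψg, hψg]
    ring
  set w : ℕ → Y := fun k => (2 : 𝕜)⁻¹ • (u (ρ (2*k)) - u (ρ (2*k+1))) with hw
  have hwW : ∀ k, w k ∈ W := fun k => W.smul_mem _ (Submodule.sub_mem W (huW _) (huW _))
  have hφw : ∀ k j, φ k (w j) = if k = j then 1 else 0 := by
    intro k j
    rw [hφ, hw]
    simp only [ContinuousLinearMap.sub_apply, map_smul, map_sub, hψu, smul_eq_mul,
      hρinj.eq_iff]
    by_cases hkj : k = j
    · subst hkj
      rw [if_pos rfl, if_pos rfl, if_neg (by omega), if_neg (by omega)]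
      norm_num
    · rw [if_neg (by omega), if_neg (by omega), if_neg (by omega), if_neg (by omega),
        if_neg hkj]
      ring
  -- the pair block system
  set J' : ℕ → Finset ℕ := fun k => F (ρ (2*k)) ∪ F (ρ (2*k+1)) with hJ'
  set β' : ℕ → ℕ → 𝕜 := fun k n =>
    if n ∈ F (ρ (2*k)) then b (ρ (2*k)) n else -(b (ρ (2*k+1)) n) with hβ'
  have hJ'm : ∀ k, ∀ n ∈ J' k, m₀ ≤ n := by
    intro k n hn
    rcases Finset.mem_union.1 hn with h | h
    exacts [hFm _ n h, hFm _ n h]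
  have hJ'd : ∀ i j, i ≠ j → Disjoint (J' i) (J' j) := by
    intro i j hij
    rw [hJ']
    simp only [Finset.disjoint_union_left, Finset.disjoint_union_right]
    refine ⟨⟨hFd _ _ ?_, hFd _ _ ?_⟩, hFd _ _ ?_, hFd _ _ ?_⟩ <;>
      exact fun h => hij (by have := hρinj h; omega)
  have hβ'1 : ∀ k n, ‖β' k n‖ ≤ 1 := by
    intro k n
    rw [hβ']
    simp only []
    split
    · exact hb1 _ _
    · rw [norm_neg]; exact hb1 _ _
  have hv' : ∀ k, ∑ n ∈ J' k, β' k n • x n = u (ρ (2*k)) - u (ρ (2*k+1)) := by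
    intro k
    have hdisj : Disjoint (F (ρ (2*k))) (F (ρ (2*k+1))) :=
      hFd _ _ (fun h => by have := hρinj h; omega)
    rw [hJ']
    simp only []
    rw [Finset.sum_union hdisj]
    have h1 : ∑ n ∈ F (ρ (2*k)), β' k n • x n = u (ρ (2*k)) := by
      refine Finset.sum_congr rfl fun n hn => ?_
      rw [hβ']
      simp only [if_pos hn]
    have h2 : ∑ n ∈ F (ρ (2*k+1)), β' k n • x n = -(u (ρ (2*k+1))) := by
      rw [show -(u (ρ (2*k+1))) = ∑ n ∈ F (ρ (2*k+1)), -(b (ρ (2*k+1)) n • x n) by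
        rw [← Finset.sum_neg_distrib]]
      refine Finset.sum_congr rfl fun n hn => ?_
      rw [hβ']
      simp only [if_neg (Finset.disjoint_right.1 hdisj hn)]
      rw [neg_smul]
    rw [h1, h2, sub_eq_add_neg]
  have hpair := St12.gen_upper x m₀ τ hτub J' β' hJ'm hJ'd hβ'1
  have hτ0 : 0 ≤ τ := le_trans hsIpos.le hsIτ
  have hwsum : ∀ (G : Finset ℕ) (a : ℕ → 𝕜),
      ‖∑ k ∈ G, a k • w k‖ ≤ (τ/2) * ((G.sup fun k => ‖a k‖₊ : NNReal) : ℝ) := by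
    intro G a
    have hrw : ∑ k ∈ G, a k • w k =
        (2:𝕜)⁻¹ • ∑ k ∈ G, a k • (∑ n ∈ J' k, β' k n • x n) := by
      rw [Finset.smul_sum]
      refine Finset.sum_congr rfl fun k _ => ?_
      rw [hv', hw]
      rw [smul_comm]
    rw [hrw, norm_smul]
    have h2norm : ‖(2:𝕜)⁻¹‖ = 2⁻¹ := by
      rw [norm_inv]
      norm_num
    rw [h2norm]
    have hup := hpair G a
    calc (2:ℝ)⁻¹ * ‖∑ k ∈ G, a k • ∑ n ∈ J' k, β' k n • x n‖
        ≤ 2⁻¹ * (τ * ((G.sup fun k => ‖a k‖₊ : NNReal) : ℝ)) :=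
          mul_le_mul_of_nonneg_left hup (by norm_num)
      _ = (τ/2) * ((G.sup fun k => ‖a k‖₊ : NNReal) : ℝ) := by ring
  obtain ⟨P, hPP, hPn, hPr, e, he⟩ := St12.exists_P W hWc w hwW φ (2*r⁻¹) (τ/2)
    (by positivity) (by positivity) hφnorm hφ0 hφw hwsum
  have hbound : (τ/2) * (2*r⁻¹) ≤ C := by
    have hrr : (τ/2) * (2*r⁻¹) = τ / r := by
      field_simp
    rw [hrr, div_le_iff₀ hrpos]
    have h2 : sI * (1-3*ε) ≤ r := by rw [hr, hL]; nlinarith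
    have hC0 : (0:ℝ) ≤ C := by linarith
    calc τ ≤ sI * (1+ε) := hτsI
      _ = C * (sI * (1-3*ε)) := by rw [hkey]; ring
      _ ≤ C * r := mul_le_mul_of_nonneg_left h2 hC0
  exact ⟨P, hPP, le_trans hPn hbound, hPr.trans (fun y hy => hWZ hy), e, le_trans he hbound⟩
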